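/- There exist a complex number γ with Im(γ) < 0 and a three times continuously differentiable function W : ℝ → ℂ such that for every z ∈ ℝ one has γ·(γ − z²)²·W'(z) + D³[(γ − z²)·W(z)] = 0, and moreover W(z) → 0 as z → −∞ and W(z) → 1 as z → +∞. -/

import Mathlib

open Filter MeasureTheory Set

noncomputable section

namespace PrandtlAux

def γ0 : ℂ := (-1/2 : ℝ) + (-(Real.sqrt 3)/2 : ℝ) * Complex.I

def p0 : ℂ := (-(1/4) : ℝ) + (Real.sqrt 3/4 : ℝ) * Complex.I

lemma sqrt3_sq : Real.sqrt 3 * Real.sqrt 3 = 3 := Real.mul_self_sqrt (by norm_num)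

lemma sqrt3C : ((Real.sqrt 3 : ℝ) : ℂ) ^ 2 = 3 := by
  rw [← Complex.ofReal_pow, sq, sqrt3_sq]
  norm_num

lemma γ0_im : γ0.im = -(Real.sqrt 3)/2 := by simp [γ0]

lemma γ0_im_neg : γ0.im < 0 := by
  rw [γ0_im]
  have h3 : 0 < Real.sqrt 3 := Real.sqrt_pos.mpr (by norm_num)
  linarith

lemma p0_re : p0.re = -(1/4) := by simp [p0]

lemma hquad : γ0 ^ 2 + γ0 + 1 = 0 := by
  unfold γ0
  push_cast
  linear_combination (Complex.I ^ 2 / 4) * sqrt3C + (3/4 : ℂ) * Complex.I_sq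

lemma hγ3 : γ0 ^ 3 = 1 := by linear_combination (γ0 - 1) * hquad

lemma γ0_ne : γ0 ≠ 0 := by
  intro h
  have := hγ3
  rw [h] at this
  simp at this

lemma hp0 : 2 * p0 = γ0 ^ 2 := by
  unfold p0 γ0
  push_cast
  linear_combination (-(Complex.I ^ 2) / 4) * sqrt3C + (-(3 : ℂ)/4) * Complex.I_sq

lemma p0_ne : p0 ≠ 0 := by
  intro h
  have := congrArg Complex.re h
  rw [p0_re] at this
  simp at this

lemma F_im (z : ℝ) : (γ0 - (z : ℂ) ^ 2).im = -(Real.sqrt 3)/2 := by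
  simp [γ0, ← Complex.ofReal_pow]

lemma F_ne (z : ℝ) : γ0 - (z : ℂ) ^ 2 ≠ 0 := by
  intro h
  have h1 := congrArg Complex.im h
  rw [F_im] at h1
  simp at h1

def V0 (z : ℝ) : ℂ := Complex.exp (p0 * (z : ℂ) ^ 2) / (γ0 - (z : ℂ) ^ 2) ^ 2

def Vd (z : ℝ) : ℂ :=
  (2*p0*(z:ℂ)*(γ0 - (z:ℂ)^2) + 4*(z:ℂ)) * Complex.exp (p0 * (z:ℂ)^2) / (γ0 - (z:ℂ)^2)^3

def Vdd (z : ℝ) : ℂ :=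
  (4*p0^2*(z:ℂ)^2*(γ0 - (z:ℂ)^2)^2 + 2*p0*(γ0 - (z:ℂ)^2)^2 + 16*p0*(z:ℂ)^2*(γ0 - (z:ℂ)^2)
      + 4*(γ0 - (z:ℂ)^2) + 24*(z:ℂ)^2) * Complex.exp (p0 * (z:ℂ)^2) / (γ0 - (z:ℂ)^2)^4

def G0 (z : ℝ) : ℂ := -2*p0*(z:ℂ) * Complex.exp (p0 * (z:ℂ)^2) / (γ0 - (z:ℂ)^2)

lemma keyODE (w : ℂ) :
    (4*p0^2*w^2*(γ0 - w^2)^2 + 2*p0*(γ0 - w^2)^2 + 16*p0*w^2*(γ0 - w^2)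
        + 4*(γ0 - w^2) + 24*w^2) * (γ0 - w^2)
      - 6*w*(2*p0*w*(γ0 - w^2) + 4*w)*(γ0 - w^2)
      + (γ0*(γ0 - w^2)^2 - 6)*(γ0 - w^2)^2 = 0 := by
  linear_combination
    ((1:ℂ)*w^6 + (-1:ℂ)*γ0^1*w^4 + (-1:ℂ)*γ0^2*w^2 + (-1:ℂ)*γ0^2*w^8 + (1:ℂ)*γ0^3
      + (3:ℂ)*γ0^3*w^6 + (-3:ℂ)*γ0^4*w^4 + (1:ℂ)*γ0^5*w^2 + (-2:ℂ)*p0^1*w^8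
      + (6:ℂ)*p0^1*γ0^1*w^6 + (-6:ℂ)*p0^1*γ0^2*w^4 + (2:ℂ)*p0^1*γ0^3*w^2) * hp0
    + ((2:ℂ)*w^4 + (-4:ℂ)*γ0^1*w^2 + (-1:ℂ)*γ0^1*w^8 + (2:ℂ)*γ0^2 + (3:ℂ)*γ0^2*w^6
      + (-3:ℂ)*γ0^3*w^4 + (1:ℂ)*γ0^4*w^2) * hγ3

lemma keyG (w : ℂ) :
    (-2*p0 - 4*p0^2*w^2)*(γ0 - w^2) - 4*p0*w^2 - (γ0*(γ0 - w^2)^2 - 2) = 0 := by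
  linear_combination
    ((-1:ℂ)*w^2 + (-1:ℂ)*γ0^1 + (1:ℂ)*γ0^2*w^4 + (-1:ℂ)*γ0^3*w^2 + (2:ℂ)*p0^1*w^4
      + (-2:ℂ)*p0^1*γ0^1*w^2) * hp0
    + ((-2:ℂ) + (1:ℂ)*γ0^1*w^4 + (-1:ℂ)*γ0^2*w^2) * hγ3

lemma hasDerivAt_ofReal' (z : ℝ) : HasDerivAt (fun t : ℝ => (t : ℂ)) 1 z := by
  exact Complex.ofRealCLM.hasDerivAt (x := z)

lemma sq_hasDeriv (z : ℝ) : HasDerivAt (fun t : ℝ => ((t : ℂ)) ^ 2) (2*(z:ℂ)) z := by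
  have e : (fun t : ℝ => ((t : ℂ)) ^ 2) = fun t : ℝ => (t:ℂ) * (t:ℂ) := by
    funext t; ring
  rw [e]
  have h := (hasDerivAt_ofReal' z).mul (hasDerivAt_ofReal' z)
  exact h.congr_deriv (by ring)

lemma E_hasDeriv (z : ℝ) :
    HasDerivAt (fun t : ℝ => Complex.exp (p0 * (t : ℂ) ^ 2))
      (2*p0*(z:ℂ) * Complex.exp (p0 * (z:ℂ)^2)) z := by
  have h1 : HasDerivAt (fun t : ℝ => p0 * (t : ℂ) ^ 2) (p0 * (2 * (z:ℂ))) z := by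
    have := (sq_hasDeriv z).const_mul p0
    convert this using 1
    try ring
  have := h1.cexp
  convert this using 1
  try ring

lemma F_hasDeriv (z : ℝ) :
    HasDerivAt (fun t : ℝ => γ0 - (t : ℂ) ^ 2) (-2*(z:ℂ)) z := by
  have := (sq_hasDeriv z).const_sub γ0
  exact this.congr_deriv (by ring)

lemma F2_hasDeriv (z : ℝ) :
    HasDerivAt (fun t : ℝ => (γ0 - (t:ℂ)^2) ^ 2) (2*(γ0 - (z:ℂ)^2)*(-2*(z:ℂ))) z := by
  have e : (fun t : ℝ => (γ0 - (t:ℂ)^2) ^ 2)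
      = fun t : ℝ => (γ0 - (t:ℂ)^2) * (γ0 - (t:ℂ)^2) := by
    funext t; ring
  rw [e]
  have h := (F_hasDeriv z).mul (F_hasDeriv z)
  exact h.congr_deriv (by ring)

lemma F3_hasDeriv (z : ℝ) :
    HasDerivAt (fun t : ℝ => (γ0 - (t:ℂ)^2) ^ 3) (3*(γ0 - (z:ℂ)^2)^2*(-2*(z:ℂ))) z := by
  have e : (fun t : ℝ => (γ0 - (t:ℂ)^2) ^ 3)
      = fun t : ℝ => (γ0 - (t:ℂ)^2) * (γ0 - (t:ℂ)^2) ^ 2 := by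
    funext t; ring
  rw [e]
  have h := (F_hasDeriv z).mul (F2_hasDeriv z)
  exact h.congr_deriv (by ring)

lemma V0_hasDeriv (z : ℝ) : HasDerivAt V0 (Vd z) z := by
  have hd := (E_hasDeriv z).div (F2_hasDeriv z) (pow_ne_zero 2 (F_ne z))
  refine hd.congr_deriv ?_
  symm
  have hF := F_ne z
  unfold Vd
  field_simp
  ring

lemma Vd_hasDeriv (z : ℝ) : HasDerivAt Vd (Vdd z) z := by
  have hlin := (((hasDerivAt_ofReal' z).const_mul (2*p0)).mul (F_hasDeriv z)).add
    ((hasDerivAt_ofReal' z).const_mul 4)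
  have hd := (hlin.mul (E_hasDeriv z)).div (F3_hasDeriv z) (pow_ne_zero 3 (F_ne z))
  refine hd.congr_deriv ?_
  symm
  have hF := F_ne z
  unfold Vdd
  simp only [Pi.mul_apply, Pi.add_apply]
  field_simp
  ring

lemma hODE (z : ℝ) :
    (γ0 - (z:ℂ)^2) * Vdd z - 6*(z:ℂ)*Vd z + (γ0*(γ0 - (z:ℂ)^2)^2 - 6)*V0 z = 0 := by
  have hF := F_ne z
  have h : (γ0 - (z:ℂ)^2) * Vdd z - 6*(z:ℂ)*Vd z + (γ0*(γ0 - (z:ℂ)^2)^2 - 6)*V0 z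
      = ((4*p0^2*(z:ℂ)^2*(γ0 - (z:ℂ)^2)^2 + 2*p0*(γ0 - (z:ℂ)^2)^2
            + 16*p0*(z:ℂ)^2*(γ0 - (z:ℂ)^2) + 4*(γ0 - (z:ℂ)^2) + 24*(z:ℂ)^2) * (γ0 - (z:ℂ)^2)
          - 6*(z:ℂ)*(2*p0*(z:ℂ)*(γ0 - (z:ℂ)^2) + 4*(z:ℂ))*(γ0 - (z:ℂ)^2)
          + (γ0*(γ0 - (z:ℂ)^2)^2 - 6)*(γ0 - (z:ℂ)^2)^2)
        * (Complex.exp (p0 * (z:ℂ)^2) / (γ0 - (z:ℂ)^2)^4) := by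
    unfold Vdd Vd V0
    field_simp
  rw [h, keyODE ((z:ℂ)), zero_mul]

lemma G_hasDeriv (z : ℝ) :
    HasDerivAt G0 (γ0 * Complex.exp (p0 * (z:ℂ)^2) - 2 * V0 z) z := by
  have hnum := (((hasDerivAt_ofReal' z).const_mul (-2*p0)).mul (E_hasDeriv z))
  have hd := hnum.div (F_hasDeriv z) (F_ne z)
  refine hd.congr_deriv ?_
  symm
  have hF := F_ne z
  have key := keyG ((z:ℂ))
  unfold V0
  simp only [Pi.mul_apply]
  field_simp
  linear_combination (-1 : ℂ) * key

-- norms and integrability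

lemma normE (z : ℝ) : ‖Complex.exp (p0 * (z:ℂ)^2)‖ = Real.exp (-(1/4) * z^2) := by
  rw [Complex.norm_exp]
  congr 1
  rw [show p0 * (z:ℂ)^2 = ((z^2 : ℝ) : ℂ) * p0 by push_cast; ring, Complex.re_ofReal_mul,
    p0_re]
  ring

lemma normF_ge (z : ℝ) : Real.sqrt 3 / 2 ≤ ‖γ0 - (z:ℂ)^2‖ := by
  have h := Complex.abs_im_le_norm (γ0 - (z:ℂ)^2)
  rw [F_im] at h
  have h3 : |(-(Real.sqrt 3)/2)| = Real.sqrt 3 / 2 := by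
    rw [abs_of_nonpos (by nlinarith [Real.sqrt_nonneg 3])]
    ring
  rw [h3] at h
  exact h

lemma normF_sq (z : ℝ) : (3:ℝ)/4 ≤ ‖γ0 - (z:ℂ)^2‖^2 := by
  nlinarith [normF_ge z, sqrt3_sq, Real.sqrt_nonneg 3, norm_nonneg (γ0 - (z:ℂ)^2)]

lemma V0_bound (z : ℝ) : ‖V0 z‖ ≤ 4/3 * Real.exp (-(1/4) * z^2) := by
  unfold V0
  rw [norm_div, norm_pow, normE]
  rw [show (4:ℝ)/3 * Real.exp (-(1/4) * z^2) = Real.exp (-(1/4) * z^2) / (3/4) by ring]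
  exact div_le_div_of_nonneg_left (Real.exp_nonneg _) (by norm_num) (normF_sq z)

lemma V0_contDiff : ContDiff ℝ 2 V0 := by
  have hf : ContDiff ℝ 2 (fun z : ℝ => Complex.exp (p0 * (z:ℂ)^2)) :=
    (Complex.contDiff_exp (𝕜 := ℝ)).comp
      (contDiff_const.mul (Complex.ofRealCLM.contDiff.pow 2))
  have hg : ContDiff ℝ 2 (fun z : ℝ => (γ0 - (z:ℂ)^2)^2) :=
    (contDiff_const.sub (Complex.ofRealCLM.contDiff.pow 2)).pow 2
  have hinv := hg.inv fun z => pow_ne_zero 2 (F_ne z)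
  have := hf.mul hinv
  unfold V0
  simpa only [div_eq_mul_inv, Pi.inv_apply] using this

lemma V0_cont : Continuous V0 := V0_contDiff.continuous

lemma V0_int : Integrable V0 := by
  have hg : Integrable (fun z : ℝ => (4:ℝ)/3 * Real.exp (-(1/4) * z^2)) :=
    (integrable_exp_neg_mul_sq (by norm_num : (0:ℝ) < 1/4)).const_mul _
  exact hg.mono' V0_cont.aestronglyMeasurable (Eventually.of_forall V0_bound)

lemma negp0_re : 0 < (-p0).re := by
  rw [Complex.neg_re, p0_re]
  norm_num

lemma E_int : Integrable (fun z : ℝ => Complex.exp (p0 * (z:ℂ)^2)) := by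
  have := integrable_cexp_neg_mul_sq negp0_re
  simpa [neg_neg] using this

lemma gauss_ne : (∫ z : ℝ, Complex.exp (p0 * (z:ℂ)^2)) ≠ 0 := by
  have h := integral_gaussian_complex negp0_re
  rw [show (∫ z : ℝ, Complex.exp (p0 * (z:ℂ)^2))
      = ∫ z : ℝ, Complex.exp (-(-p0) * (z:ℂ)^2) by simp [neg_neg]]
  rw [h]
  have hb : ((Real.pi : ℂ) / (-p0)) ≠ 0 :=
    div_ne_zero (by exact_mod_cast Real.pi_ne_zero) (neg_ne_zero.mpr p0_ne)
  intro h0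
  have h1 : ((Real.pi : ℂ)/(-p0)) ^ ((1/2 : ℂ) + (1/2 : ℂ))
      = ((Real.pi : ℂ)/(-p0)) ^ (1/2 : ℂ) * ((Real.pi : ℂ)/(-p0)) ^ (1/2 : ℂ) :=
    Complex.cpow_add _ _ hb
  rw [h0, mul_zero] at h1
  rw [show (1/2 : ℂ) + 1/2 = 1 by norm_num, Complex.cpow_one] at h1
  exact hb h1

-- limits of G0

lemma p0_im : p0.im = Real.sqrt 3 / 4 := by simp [p0]

lemma norm_p0 : ‖p0‖ = 1/2 := by
  have : Complex.normSq p0 = 1/4 := by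
    rw [Complex.normSq_apply, p0_re, p0_im]
    nlinarith [sqrt3_sq]
  rw [Complex.norm_def, this]
  rw [show (1/4 : ℝ) = (1/2)^2 by norm_num, Real.sqrt_sq (by norm_num)]

lemma sqrt3_ge_one : (1:ℝ) ≤ Real.sqrt 3 := by
  nlinarith [sqrt3_sq, Real.sqrt_nonneg 3]

lemma G0_bound (z : ℝ) : ‖G0 z‖ ≤ 2 * (|z| * Real.exp (-(1/4) * z^2)) := by
  unfold G0
  rw [norm_div]
  have hnum : ‖-2*p0*(z:ℂ) * Complex.exp (p0 * (z:ℂ)^2)‖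
      = |z| * Real.exp (-(1/4) * z^2) := by
    rw [norm_mul, norm_mul, norm_mul, normE, norm_p0]
    simp [Complex.norm_real]
    try ring
  rw [hnum]
  have hF : (1:ℝ)/2 ≤ ‖γ0 - (z:ℂ)^2‖ := le_trans (by linarith [sqrt3_ge_one]) (normF_ge z)
  have hpos : (0:ℝ) < 1/2 := by norm_num
  calc |z| * Real.exp (-(1/4) * z^2) / ‖γ0 - (z:ℂ)^2‖
      ≤ |z| * Real.exp (-(1/4) * z^2) / (1/2) :=
        div_le_div_of_nonneg_left (by positivity) hpos hF
    _ = 2 * (|z| * Real.exp (-(1/4) * z^2)) := by ring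

lemma haux : Tendsto (fun z : ℝ => |z| * Real.exp (-(1/4) * z^2)) atTop (nhds 0) := by
  have h1 : Tendsto (fun z : ℝ => z^2/4) atTop atTop :=
    (tendsto_pow_atTop two_ne_zero).atTop_div_const (by norm_num)
  have h2 := (Real.tendsto_pow_mul_exp_neg_atTop_nhds_zero 1).comp h1
  apply squeeze_zero' (g := fun z : ℝ => (z^2/4)^1 * Real.exp (-(z^2/4)))
  · exact Eventually.of_forall fun z => by positivity
  · filter_upwards [eventually_ge_atTop (4:ℝ)] with z hz
    rw [abs_of_nonneg (by linarith), pow_one, show -(1/4) * z^2 = -(z^2/4) by ring]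
    exact mul_le_mul_of_nonneg_right (by nlinarith) (Real.exp_nonneg _)
  · exact h2

lemma haux_bot : Tendsto (fun z : ℝ => |z| * Real.exp (-(1/4) * z^2)) atBot (nhds 0) := by
  have := haux.comp tendsto_neg_atBot_atTop
  simpa [Function.comp_def, abs_neg, neg_sq] using this

lemma G0_top : Tendsto G0 atTop (nhds 0) := by
  rw [tendsto_zero_iff_norm_tendsto_zero]
  apply squeeze_zero (fun z => norm_nonneg _) G0_bound
  simpa using haux.const_mul (2:ℝ)

lemma G0_bot : Tendsto G0 atBot (nhds 0) := by
  rw [tendsto_zero_iff_norm_tendsto_zero]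
  apply squeeze_zero (fun z => norm_nonneg _) G0_bound
  simpa using haux_bot.const_mul (2:ℝ)

-- the normalization constant

def c0 : ℂ := ∫ z : ℝ, V0 z

lemma hInt : Integrable (fun z : ℝ => γ0 * Complex.exp (p0 * (z:ℂ)^2) - 2 * V0 z) :=
  (E_int.const_mul γ0).sub (V0_int.const_mul 2)

lemma integral_zero' : ∫ z : ℝ, (γ0 * Complex.exp (p0 * (z:ℂ)^2) - 2 * V0 z) = 0 := by
  have h2 : ∀ R : ℝ, (∫ z in (-R)..R, (γ0 * Complex.exp (p0 * (z:ℂ)^2) - 2 * V0 z))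
      = G0 R - G0 (-R) := fun R =>
    intervalIntegral.integral_eq_sub_of_hasDerivAt (fun x _ => G_hasDeriv x)
      hInt.intervalIntegrable
  have h1 := intervalIntegral_tendsto_integral (a := fun R : ℝ => -R) (b := fun R : ℝ => R)
    hInt tendsto_neg_atTop_atBot tendsto_id
  have h3 : Tendsto (fun R : ℝ => G0 R - G0 (-R)) atTop (nhds (0 - 0)) :=
    G0_top.sub (G0_bot.comp tendsto_neg_atTop_atBot)
  exact tendsto_nhds_unique (h1.congr fun R => h2 R) (by simpa using h3)

lemma key_integral : γ0 * (∫ z : ℝ, Complex.exp (p0 * (z:ℂ)^2)) = 2 * c0 := by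
  have h := integral_zero'
  rw [integral_sub (E_int.const_mul γ0) (V0_int.const_mul 2)] at h
  have e1 : ∫ z : ℝ, γ0 * Complex.exp (p0 * (z:ℂ)^2)
      = γ0 * ∫ z : ℝ, Complex.exp (p0 * (z:ℂ)^2) := by
    simpa [smul_eq_mul] using
      integral_smul γ0 (fun z : ℝ => Complex.exp (p0 * (z:ℂ)^2))
  have e2 : ∫ z : ℝ, 2 * V0 z = 2 * ∫ z : ℝ, V0 z := by
    simpa [smul_eq_mul] using integral_smul (2:ℂ) V0
  rw [e1, e2] at h
  rw [sub_eq_zero] at h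
  exact h

lemma c0_ne : c0 ≠ 0 := by
  intro h
  have := key_integral
  rw [h, mul_zero] at this
  exact gauss_ne (by
    have := mul_eq_zero.mp this
    rcases this with h1 | h2
    · exact absurd h1 γ0_ne
    · exact h2)

-- the solution W

def A0 : ℂ := ∫ t in Iic (0:ℝ), V0 t

def Wfun (z : ℝ) : ℂ := (A0 + ∫ t in (0:ℝ)..z, V0 t) / c0

lemma W_hasDeriv (z : ℝ) : HasDerivAt Wfun (V0 z / c0) z := by
  have h := intervalIntegral.integral_hasDerivAt_right
    (V0_int.intervalIntegrable (a := 0) (b := z))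
    ⟨Set.univ, univ_mem, V0_cont.aestronglyMeasurable.restrict⟩
    V0_cont.continuousAt
  exact (h.const_add A0).div_const c0

lemma W_tendsto_top : Tendsto Wfun atTop (nhds 1) := by
  have h1 := intervalIntegral_tendsto_integral_Ioi (μ := volume) 0
    V0_int.integrableOn tendsto_id
  have h2 : Tendsto Wfun atTop (nhds ((A0 + ∫ t in Set.Ioi (0:ℝ), V0 t) / c0)) :=
    (tendsto_const_nhds.add h1).div_const c0
  rw [show A0 + ∫ t in Set.Ioi (0:ℝ), V0 t = c0 from
    intervalIntegral.integral_Iic_add_Ioi V0_int.integrableOn V0_int.integrableOn] at h2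
  rwa [div_self c0_ne] at h2

lemma W_tendsto_bot : Tendsto Wfun atBot (nhds 0) := by
  have h1 := intervalIntegral_tendsto_integral_Iic (μ := volume) 0
    V0_int.integrableOn tendsto_id
  have h2 : Tendsto (fun z : ℝ => (A0 + -∫ t in z..(0:ℝ), V0 t) / c0) atBot
      (nhds ((A0 + -A0) / c0)) :=
    (tendsto_const_nhds.add h1.neg).div_const c0
  have h3 : Tendsto Wfun atBot (nhds ((A0 + -A0) / c0)) := by
    apply h2.congr
    intro z
    unfold Wfun
    rw [intervalIntegral.integral_symm z 0]
  simpa using h3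

lemma W_contDiff : ContDiff ℝ 3 Wfun := by
  rw [show (3 : WithTop ℕ∞) = 2 + 1 by norm_num, contDiff_succ_iff_deriv]
  refine ⟨fun z => (W_hasDeriv z).differentiableAt, by simp, ?_⟩
  rw [show deriv Wfun = fun z => V0 z / c0 from funext fun z => (W_hasDeriv z).deriv]
  exact V0_contDiff.div_const c0

lemma W_ode (z : ℝ) :
    γ0 * (γ0 - (z:ℂ)^2)^2 * deriv Wfun z
      + iteratedDeriv 3 (fun t : ℝ => (γ0 - (t:ℂ)^2) * Wfun t) z = 0 := by
  have hg1 : deriv (fun t : ℝ => (γ0 - (t:ℂ)^2) * Wfun t)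
      = fun t : ℝ => -2*(t:ℂ)*Wfun t + (γ0 - (t:ℂ)^2) * (V0 t / c0) := by
    funext t
    exact (((F_hasDeriv t).mul (W_hasDeriv t)).deriv).trans (by ring)
  have hg2 : deriv (fun t : ℝ => -2*(t:ℂ)*Wfun t + (γ0 - (t:ℂ)^2) * (V0 t / c0))
      = fun t : ℝ => -2*Wfun t + -4*(t:ℂ)*(V0 t / c0) + (γ0 - (t:ℂ)^2) * (Vd t / c0) := by
    funext t
    have h1 := (((hasDerivAt_ofReal' t).const_mul (-2 : ℂ)).mul (W_hasDeriv t)).add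
      ((F_hasDeriv t).mul ((V0_hasDeriv t).div_const c0))
    exact h1.deriv.trans (by ring)
  have h3 := (((W_hasDeriv z).const_mul (-2 : ℂ)).add
      (((hasDerivAt_ofReal' z).const_mul (-4 : ℂ)).mul ((V0_hasDeriv z).div_const c0))).add
    ((F_hasDeriv z).mul ((Vd_hasDeriv z).div_const c0))
  rw [show (3:ℕ) = 2 + 1 from rfl, iteratedDeriv_succ, show (2:ℕ) = 1 + 1 from rfl,
    iteratedDeriv_succ, iteratedDeriv_one, hg1, hg2, (show HasDerivAt (fun t : ℝ => -2*Wfun t + -4*(t:ℂ)*(V0 t / c0)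
      + (γ0 - (t:ℂ)^2) * (Vd t / c0)) _ z from h3).deriv, (W_hasDeriv z).deriv]
  linear_combination (c0)⁻¹ * hODE z

end PrandtlAux

end

open Filter

/-- Lemma 1.2 of the paper: the spectral condition for the hyperbolic Prandtl
equations. There exist `γ : ℂ` with negative imaginary part and a three times
continuously differentiable `W : ℝ → ℂ` solving
`γ (γ - z²)² W'(z) + D³[(γ - z²) W(z)] = 0` with `W → 0` at `-∞`, `W → 1` at `+∞`. -/
theorem stmt0 :
    ∃ (γ : ℂ) (W : ℝ → ℂ), γ.im < 0 ∧ ContDiff ℝ 3 W ∧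
      (∀ z : ℝ, γ * (γ - (z : ℂ) ^ 2) ^ 2 * deriv W z
          + iteratedDeriv 3 (fun t : ℝ => (γ - (t : ℂ) ^ 2) * W t) z = 0) ∧
      Tendsto W atBot (nhds 0) ∧ Tendsto W atTop (nhds 1) := by
  exact ⟨PrandtlAux.γ0, PrandtlAux.Wfun, PrandtlAux.γ0_im_neg, PrandtlAux.W_contDiff,
    PrandtlAux.W_ode, PrandtlAux.W_tendsto_bot, PrandtlAux.W_tendsto_top⟩
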